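/- Let cap be a nonnegative, monotone, countably subadditive set function on the Borel σ-algebra of a topological space Q. Then every signed Borel measure μ of bounded variation on Q admits a unique decomposition μ = μ_d + μ_c, where μ_d vanishes on every Borel set B with cap(B) = 0, and μ_c is concentrated on some Borel set N with cap(N) = 0. -/

import Mathlib

open MeasureTheory ENNReal

theorem stmt4 {Q : Type*} [TopologicalSpace Q] [MeasurableSpace Q] [BorelSpace Q]
    (cap : Set Q → ENNReal)
    (hempty : cap ∅ = 0)
    (hmono : ∀ A B : Set Q, A ⊆ B → cap A ≤ cap B)
    (hsub : ∀ A : ℕ → Set Q, cap (⋃ i, A i) ≤ ∑' i, cap (A i))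
    (μ : SignedMeasure Q) :
    ∃! p : SignedMeasure Q × SignedMeasure Q,
      μ = p.1 + p.2 ∧
      (∀ B : Set Q, MeasurableSet B → cap B = 0 → p.1 B = 0) ∧
      (∃ N : Set Q, MeasurableSet N ∧ cap N = 0 ∧
        ∀ A : Set Q, MeasurableSet A → p.2 A = p.2 (A ∩ N)) := by
  classical
  -- cap of a union of two null sets is null
  have cap_union : ∀ {X Y : Set Q}, cap X = 0 → cap Y = 0 → cap (X ∪ Y) = 0 := by
    intro X Y hX hY
    refine le_antisymm ?_ zero_le
    have hU : X ∪ Y ⊆ ⋃ n : ℕ, (if n = 0 then X else Y) := by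
      rintro x (hx | hx)
      · exact Set.mem_iUnion.2 ⟨0, by simpa⟩
      · exact Set.mem_iUnion.2 ⟨1, by simpa⟩
    have hterm : ∀ n : ℕ, cap (if n = 0 then X else Y) = 0 := by
      intro n; split <;> assumption
    calc cap (X ∪ Y) ≤ cap (⋃ n : ℕ, (if n = 0 then X else Y)) := hmono _ _ hU
      _ ≤ ∑' n : ℕ, cap (if n = 0 then X else Y) := hsub _
      _ = 0 := by simp [hterm]
  set ν := μ.totalVariation with hν
  haveI hfinI : IsFiniteMeasure ν := by
    rw [hν, SignedMeasure.totalVariation]; infer_instance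
  -- the supremum of ν over cap-null measurable sets
  set ι := {B : Set Q // MeasurableSet B ∧ cap B = 0} with hι
  set s := ⨆ B : ι, ν B with hs
  have hsfin : s ≠ ⊤ := by
    refine ne_top_of_le_ne_top (measure_ne_top ν Set.univ) ?_
    exact iSup_le fun B => measure_mono (Set.subset_univ _)
  have key : ∀ n : ℕ, ∃ B : ι, s ≤ ν B + ((n : ℝ≥0∞) + 1)⁻¹ := by
    intro n
    rcases eq_or_ne s 0 with h0 | h0
    · exact ⟨⟨∅, MeasurableSet.empty, hempty⟩, by simp [h0]⟩
    · have hlt : s - ((n : ℝ≥0∞) + 1)⁻¹ < s :=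
        ENNReal.sub_lt_self hsfin h0 (by simp)
      rw [hs, lt_iSup_iff] at hlt
      obtain ⟨B, hB⟩ := hlt
      exact ⟨B, by
        have := hB.le
        rwa [tsub_le_iff_right] at this⟩
  choose B hB using key
  set N : Set Q := ⋃ n, (B n : Set Q) with hN
  have hNmeas : MeasurableSet N := MeasurableSet.iUnion fun n => (B n).2.1
  have hNcap : cap N = 0 := by
    refine le_antisymm ?_ zero_le
    calc cap N ≤ ∑' n, cap (B n : Set Q) := hsub _
      _ = 0 := by simp [fun n => (B n).2.2]
  have hNle : ν N ≤ s := le_iSup (fun B : ι => ν B) ⟨N, hNmeas, hNcap⟩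
  have hsle : s ≤ ν N := by
    by_contra hcon
    push_neg at hcon
    have hpos : s - ν N ≠ 0 := by
      simp only [ne_eq, tsub_eq_zero_iff_le, not_le]; exact hcon
    obtain ⟨n, hn⟩ := ENNReal.exists_inv_nat_lt hpos
    have h1 : ((n : ℝ≥0∞) + 1)⁻¹ ≤ ((n : ℝ≥0∞))⁻¹ :=
      ENNReal.inv_le_inv.2 (by simp)
    have : s ≤ ν N + ((n : ℝ≥0∞) + 1)⁻¹ :=
      (hB n).trans (add_le_add (measure_mono (Set.subset_iUnion (fun k => (B k : Set Q)) n)) le_rfl)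
    have : s < ν N + (s - ν N) :=
      lt_of_le_of_lt (this.trans (add_le_add_right h1 _)) (ENNReal.add_lt_add_left (measure_ne_top ν N) hn)
    rw [add_tsub_cancel_of_le hcon.le] at this
    exact lt_irrefl _ this
  have hNs : ν N = s := le_antisymm hNle hsle
  -- maximality: any cap-null measurable set has ν-null part outside N
  have hmax : ∀ C : Set Q, MeasurableSet C → cap C = 0 → ν (C ∩ Nᶜ) = 0 := by
    intro C hCm hCc
    have hsub' : ν N + ν (C ∩ Nᶜ) ≤ s := by
      have hd : Disjoint N (C ∩ Nᶜ) :=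
        Set.disjoint_right.2 fun x hx => fun hxN => hx.2 hxN
      have := measure_union (μ := ν) hd (hCm.inter hNmeas.compl)
      rw [← this]
      have : N ∪ C ∩ Nᶜ ⊆ N ∪ C := Set.union_subset_union_right _ Set.inter_subset_left
      calc ν (N ∪ C ∩ Nᶜ) ≤ ν (N ∪ C) := measure_mono this
        _ ≤ s := le_iSup (fun B : ι => ν B) ⟨N ∪ C, hNmeas.union hCm, cap_union hNcap hCc⟩
    rw [← hNs] at hsub'
    have hc : AddLECancellable (ν N) := ENNReal.cancel_of_ne (measure_ne_top ν N)
    have : ν (C ∩ Nᶜ) ≤ 0 := hc ((by simpa using hsub' : ν N + ν (C ∩ Nᶜ) ≤ ν N + 0))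
    exact le_antisymm this zero_le
  -- the decomposition
  set pd := μ.restrict Nᶜ with hpd
  set pc := μ.restrict N with hpc
  have hsplit : μ = pd + pc := by
    ext i hi
    rw [VectorMeasure.add_apply, hpd, hpc,
      VectorMeasure.restrict_apply _ hNmeas.compl hi,
      VectorMeasure.restrict_apply _ hNmeas hi]
    have hd : Disjoint (i ∩ Nᶜ) (i ∩ N) :=
      Set.disjoint_right.2 fun x hx hx' => hx'.2 hx.2
    rw [← VectorMeasure.of_union hd (hi.inter hNmeas.compl) (hi.inter hNmeas),
      Set.union_comm, Set.inter_union_compl]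
  have hpd0 : ∀ C : Set Q, MeasurableSet C → cap C = 0 → pd C = 0 := by
    intro C hCm hCc
    rw [hpd, VectorMeasure.restrict_apply _ hNmeas.compl hCm]
    exact SignedMeasure.null_of_totalVariation_zero μ (hmax C hCm hCc)
  have hpcN : ∀ A : Set Q, MeasurableSet A → pc A = pc (A ∩ N) := by
    intro A hAm
    rw [hpc, VectorMeasure.restrict_apply _ hNmeas hAm,
      VectorMeasure.restrict_apply _ hNmeas (hAm.inter hNmeas),
      Set.inter_assoc, Set.inter_self]
  refine ⟨(pd, pc), ⟨hsplit, hpd0, ⟨N, hNmeas, hNcap, hpcN⟩⟩, ?_⟩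
  -- uniqueness
  rintro ⟨qd, qc⟩ ⟨hq1, hq2, N₂, hN₂m, hN₂c, hq3⟩
  set M : Set Q := N ∪ N₂ with hM
  have hMm : MeasurableSet M := hNmeas.union hN₂m
  have hMc : cap M = 0 := cap_union hNcap hN₂c
  have hq_eq_pd : qd = pd := by
    ext A hA
    have split : ∀ (v : SignedMeasure Q), v A = v (A ∩ M) + v (A ∩ Mᶜ) := by
      intro v
      have hd : Disjoint (A ∩ M) (A ∩ Mᶜ) :=
        Set.disjoint_right.2 fun x hx hx' => hx.2 hx'.2
      rw [← VectorMeasure.of_union hd (hA.inter hMm) (hA.inter hMm.compl),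
        Set.inter_union_compl]
    have hcapAM : cap (A ∩ M) = 0 :=
      le_antisymm (le_trans (hmono _ _ Set.inter_subset_right) hMc.le) zero_le
    have hqd0 : qd (A ∩ M) = 0 := hq2 _ (hA.inter hMm) hcapAM
    have hpd0' : pd (A ∩ M) = 0 := hpd0 _ (hA.inter hMm) hcapAM
    -- cc vanishes outside M
    have hqc0 : qc (A ∩ Mᶜ) = 0 := by
      rw [hq3 _ (hA.inter hMm.compl)]
      have : A ∩ Mᶜ ∩ N₂ = ∅ := by
        ext x; simp only [Set.mem_inter_iff, Set.mem_compl_iff, hM, Set.mem_union,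
          Set.mem_empty_iff_false, iff_false]
        rintro ⟨⟨_, hx⟩, hx2⟩; exact hx (Or.inr hx2)
      rw [this, VectorMeasure.empty]
    have hpc0 : pc (A ∩ Mᶜ) = 0 := by
      rw [hpcN _ (hA.inter hMm.compl)]
      have : A ∩ Mᶜ ∩ N = ∅ := by
        ext x; simp only [Set.mem_inter_iff, Set.mem_compl_iff, hM, Set.mem_union,
          Set.mem_empty_iff_false, iff_false]
        rintro ⟨⟨_, hx⟩, hx2⟩; exact hx (Or.inl hx2)
      rw [this, VectorMeasure.empty]
    have hμq : μ (A ∩ Mᶜ) = qd (A ∩ Mᶜ) + qc (A ∩ Mᶜ) := by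
      rw [hq1, VectorMeasure.add_apply]
    have hμp : μ (A ∩ Mᶜ) = pd (A ∩ Mᶜ) + pc (A ∩ Mᶜ) := by
      rw [hsplit, VectorMeasure.add_apply]
    have : qd (A ∩ Mᶜ) = pd (A ∩ Mᶜ) := by
      have h1 := hμq; rw [hqc0, add_zero] at h1
      have h2 := hμp; rw [hpc0, add_zero] at h2
      rw [← h1, ← h2]
    rw [split qd, split pd, hqd0, hpd0', this]
  have hq_eq_pc : qc = pc := by
    have h1 : qc = μ - qd := by rw [hq1]; abel
    have h2 : pc = μ - pd := by rw [hsplit]; abel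
    rw [h1, h2, hq_eq_pd]
  rw [Prod.ext_iff]
  exact ⟨hq_eq_pd, hq_eq_pc⟩
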